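/- For any even positive integer k and nonnegative integer m, the number of fixed-point free involutions commuting with a permutation of cycle type [k^m] equals Σ_{r=0}^{⌊m/2⌋} C(m, 2r) k^r (2r-1)!!. -/

import Mathlib

open Equiv Function Finset
open scoped Classical Nat

namespace CommMatchAux





variable {k m : ℕ}

def std (k m : ℕ) : Equiv.Perm (ZMod k × Fin m) :=
  Equiv.prodCongr (Equiv.addRight (1 : ZMod k)) (Equiv.refl (Fin m))

@[simp] lemma std_apply (p : ZMod k × Fin m) : std k m p = (p.1 + 1, p.2) := rfl

lemma std_pow (n : ℕ) (p : ZMod k × Fin m) : ((std k m) ^ n) p = (p.1 + n, p.2) := by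
  induction n with
  | zero => simp
  | succ n ih =>
    rw [pow_succ', Equiv.Perm.mul_apply, std_apply, ih]
    push_cast
    simp [add_assoc, add_comm]

lemma isPeriodicPt_std_iff (n : ℕ) (p : ZMod k × Fin m) :
    IsPeriodicPt (⇑(std k m)) n p ↔ k ∣ n := by
  have : (⇑(std k m))^[n] p = (p.1 + n, p.2) := by
    rw [← Equiv.Perm.coe_pow, std_pow]
  rw [IsPeriodicPt, IsFixedPt, this, Prod.ext_iff]
  simp [left_eq_add, eq_comm, ZMod.natCast_eq_zero_iff]

lemma minimalPeriod_std (p : ZMod k × Fin m) :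
    Function.minimalPeriod (⇑(std k m)) p = k := by
  refine Nat.dvd_antisymm ?_ ?_
  · exact IsPeriodicPt.minimalPeriod_dvd ((isPeriodicPt_std_iff k p).2 dvd_rfl)
  · exact (isPeriodicPt_std_iff _ p).1 (isPeriodicPt_minimalPeriod _ _)



variable {X Y : Type*}

lemma permCongr_mul (E : X ≃ Y) (p q : Equiv.Perm X) :
    E.permCongr (p * q) = E.permCongr p * E.permCongr q := by
  ext y; simp [Equiv.Perm.mul_apply]

lemma permCongr_one (E : X ≃ Y) : E.permCongr (1 : Equiv.Perm X) = 1 := by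
  ext y; simp

lemma permCongr_pow (E : X ≃ Y) (p : Equiv.Perm X) (n : ℕ) :
    E.permCongr (p ^ n) = (E.permCongr p) ^ n := by
  induction n with
  | zero => simpa using permCongr_one E
  | succ n ih => rw [pow_succ, pow_succ, permCongr_mul, ih]

lemma minimalPeriod_permCongr (E : X ≃ Y) (p : Equiv.Perm X) (y : Y) :
    Function.minimalPeriod (⇑(E.permCongr p)) y = Function.minimalPeriod (⇑p) (E.symm y) := by
  have hp : ∀ n, IsPeriodicPt (⇑(E.permCongr p)) n y ↔ IsPeriodicPt (⇑p) n (E.symm y) := by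
    intro n
    rw [IsPeriodicPt, IsPeriodicPt, IsFixedPt, IsFixedPt, ← Equiv.Perm.coe_pow,
      ← Equiv.Perm.coe_pow, ← permCongr_pow]
    simp only [permCongr_apply]
    rw [Equiv.apply_eq_iff_eq_symm_apply]
  exact Nat.dvd_antisymm
    (IsPeriodicPt.minimalPeriod_dvd ((hp _).2 (isPeriodicPt_minimalPeriod _ _)))
    (IsPeriodicPt.minimalPeriod_dvd ((hp _).1 (isPeriodicPt_minimalPeriod _ _)))

lemma card_filter_permCongr [Fintype X] [DecidableEq X] [Fintype Y] [DecidableEq Y]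
    (E : X ≃ Y) (α : Equiv.Perm X) :
    (Finset.univ.filter fun ι : Equiv.Perm X =>
        ι * ι = 1 ∧ (∀ x, ι x ≠ x) ∧ ι * α = α * ι).card =
    (Finset.univ.filter fun ι : Equiv.Perm Y =>
        ι * ι = 1 ∧ (∀ y, ι y ≠ y) ∧ ι * (E.permCongr α) = (E.permCongr α) * ι).card := by
  apply Finset.card_bij (fun ι _ => E.permCongr ι)
  · intro ι hι
    simp only [Finset.mem_filter, Finset.mem_univ, true_and] at hι ⊢
    obtain ⟨h1, h2, h3⟩ := hι
    refine ⟨?_, ?_, ?_⟩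
    · rw [← permCongr_mul, h1, permCongr_one]
    · intro y hy
      simp only [permCongr_apply] at hy
      rw [Equiv.apply_eq_iff_eq_symm_apply] at hy
      exact h2 _ hy
    · rw [← permCongr_mul, ← permCongr_mul, h3]
  · intro a _ b _ h
    exact E.permCongr.injective h
  · intro ι hι
    refine ⟨E.symm.permCongr ι, ?_, ?_⟩
    · simp only [Finset.mem_filter, Finset.mem_univ, true_and] at hι ⊢
      obtain ⟨h1, h2, h3⟩ := hι
      refine ⟨?_, ?_, ?_⟩
      · rw [← permCongr_mul, h1, permCongr_one]
      · intro x hx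
        simp only [permCongr_apply] at hx
        rw [Equiv.apply_eq_iff_eq_symm_apply] at hx
        exact h2 _ hx
      · have : α = E.symm.permCongr (E.permCongr α) := by ext x; simp
        rw [this, ← permCongr_mul, ← permCongr_mul, h3]
    · ext y
      simp



def tw {k m : ℕ} (g : Equiv.Perm (Fin m)) (f : Fin m → ZMod k) : Equiv.Perm (ZMod k × Fin m) where
  toFun p := (p.1 + f p.2, g p.2)
  invFun p := (p.1 - f (g.symm p.2), g.symm p.2)
  left_inv p := by simp
  right_inv p := by simp

@[simp] lemma tw_apply {k m : ℕ} (g : Equiv.Perm (Fin m)) (f : Fin m → ZMod k)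
    (p : ZMod k × Fin m) : tw g f p = (p.1 + f p.2, g p.2) := rfl

lemma structure_lemma {k m : ℕ} (hk : 0 < k) (ι : Equiv.Perm (ZMod k × Fin m))
    (hcomm : ι * std k m = std k m * ι) (i : ZMod k) (c : Fin m) :
    ι (i, c) = ((ι (0, c)).1 + i, (ι (0, c)).2) := by
  haveI : NeZero k := ⟨hk.ne'⟩
  have hc : Commute ι (std k m) := hcomm
  have hpow : ∀ n : ℕ, ι * (std k m) ^ n = (std k m) ^ n * ι := fun n => hc.pow_right n
  have h1 : (i, c) = ((std k m) ^ i.val) (0, c) := by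
    rw [std_pow, zero_add, ZMod.natCast_zmod_val]
  rw [h1, ← Equiv.Perm.mul_apply, hpow, Equiv.Perm.mul_apply, std_pow, ZMod.natCast_zmod_val,
    add_comm]





lemma g_sq_apply {γ : Type*} {g : Equiv.Perm γ} (h : g * g = 1) (c : γ) : g (g c) = c := by
  have := Equiv.Perm.ext_iff.1 h c
  simpa [Equiv.Perm.mul_apply] using this

lemma model_card_eq_pairs {k m : ℕ} [NeZero k] (hk : 0 < k) :
    (Finset.univ.filter fun ι : Equiv.Perm (ZMod k × Fin m) =>
        ι * ι = 1 ∧ (∀ p, ι p ≠ p) ∧ ι * std k m = std k m * ι).card =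
    (Finset.univ.filter fun gf : Equiv.Perm (Fin m) × (Fin m → ZMod k) =>
        gf.1 * gf.1 = 1 ∧ ∀ c, gf.2 (gf.1 c) + gf.2 c = 0 ∧ (gf.1 c = c → gf.2 c ≠ 0)).card := by
  symm
  apply Finset.card_bij (fun gf _ => tw gf.1 gf.2)
  · rintro ⟨g, f⟩ hgf
    simp only [Finset.mem_filter, Finset.mem_univ, true_and] at hgf ⊢
    obtain ⟨hg, hf⟩ := hgf
    refine ⟨?_, ?_, ?_⟩
    · apply Equiv.ext
      rintro ⟨i, c⟩
      simp only [Equiv.Perm.mul_apply, tw_apply, Equiv.Perm.one_apply]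
      rw [Prod.ext_iff]
      constructor
      · simp only
        rw [add_assoc, add_comm (f c), (hf c).1, add_zero]
      · exact g_sq_apply hg c
    · rintro ⟨i, c⟩ h
      rw [tw_apply, Prod.ext_iff] at h
      obtain ⟨h1, h2⟩ := h
      simp only at h1 h2
      exact (hf c).2 h2 (by simpa using h1)
    · apply Equiv.ext
      rintro ⟨i, c⟩
      simp only [Equiv.Perm.mul_apply, tw_apply, std_apply]
      rw [Prod.ext_iff]
      exact ⟨add_right_comm i 1 (f c), rfl⟩
  · rintro ⟨g1, f1⟩ _ ⟨g2, f2⟩ _ h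
    have key : ∀ c, (f1 c, g1 c) = (f2 c, g2 c) := by
      intro c
      have := Equiv.ext_iff.1 h (0, c)
      simpa using this
    have hf : f1 = f2 := funext fun c => (Prod.ext_iff.1 (key c)).1
    have hg : g1 = g2 := Equiv.ext fun c => (Prod.ext_iff.1 (key c)).2
    rw [Prod.ext_iff]; exact ⟨hg, hf⟩
  · intro ι hι
    simp only [Finset.mem_filter, Finset.mem_univ, true_and] at hι
    obtain ⟨h1, h2, h3⟩ := hι
    set F : Fin m → ZMod k := fun c => (ι (0, c)).1 with hF
    set G : Fin m → Fin m := fun c => (ι (0, c)).2 with hG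
    have key : ∀ (i : ZMod k) (c : Fin m), ι (i, c) = (F c + i, G c) :=
      fun i c => structure_lemma hk ι h3 i c
    have key2 : ∀ c, F (G c) + F c = 0 ∧ G (G c) = c := by
      intro c
      have h0 : ι (ι (0, c)) = (0, c) := g_sq_apply h1 (0, c)
      rw [show ι (0, c) = (F c, G c) by rw [key]; simp, key] at h0
      rw [Prod.ext_iff] at h0
      exact ⟨by simpa using h0.1, h0.2⟩
    have hGinv : Function.Involutive G := fun c => (key2 c).2
    refine ⟨(hGinv.toPerm, F), ?_, ?_⟩
    · simp only [Finset.mem_filter, Finset.mem_univ, true_and]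
      refine ⟨?_, ?_⟩
      · apply Equiv.ext
        intro c
        simp [Equiv.Perm.mul_apply, hGinv c]
      · intro c
        simp only [Involutive.coe_toPerm]
        refine ⟨(key2 c).1, ?_⟩
        intro hfix hF0
        apply h2 (0, c)
        rw [key]
        rw [hF0, hfix, zero_add]
    · apply Equiv.ext
      rintro ⟨i, c⟩
      rw [tw_apply, key]
      rw [Prod.ext_iff]
      exact ⟨add_comm i (F c), rfl⟩



lemma half_ne_zero {k : ℕ} (hk : Even k) (hkpos : 0 < k) : ((k / 2 : ℕ) : ZMod k) ≠ 0 := by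
  obtain ⟨j, hj⟩ := hk
  intro h
  rw [ZMod.natCast_eq_zero_iff] at h
  have hj2 : k / 2 = j := by omega
  rw [hj2] at h
  have := Nat.le_of_dvd (by omega) h
  omega

lemma half_add_half {k : ℕ} (hk : Even k) : ((k / 2 : ℕ) : ZMod k) + ((k / 2 : ℕ) : ZMod k) = 0 := by
  obtain ⟨j, hj⟩ := hk
  have hj2 : k / 2 = j := by omega
  rw [hj2, ← Nat.cast_add, show j + j = k by omega, ZMod.natCast_self]

lemma add_self_eq_zero_iff {k : ℕ} [NeZero k] (hk : Even k) (hkpos : 0 < k) (x : ZMod k) :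
    x + x = 0 ↔ x = 0 ∨ x = ((k / 2 : ℕ) : ZMod k) := by
  constructor
  · intro h
    obtain ⟨j, hj⟩ := hk
    have hx : x = ((x.val : ℕ) : ZMod k) := (ZMod.natCast_zmod_val x).symm
    rw [hx, ← Nat.cast_add, ZMod.natCast_eq_zero_iff] at h
    have hval : x.val < k := ZMod.val_lt x
    have hj0 : 0 < j := by omega
    -- k = j + j divides x.val + x.val, x.val < k
    have : j ∣ x.val := by
      obtain ⟨t, ht⟩ := h
      have hkt : k * t = j * t + j * t := by rw [hj]; ring
      exact ⟨t, by linarith⟩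
    obtain ⟨t, ht⟩ := this
    have ht2 : t < 2 := by nlinarith
    interval_cases t
    · left; rw [hx]; simp [ht]
    · right; rw [hx, ht]
      congr 1
      omega
  · rintro (rfl | rfl)
    · simp
    · exact half_add_half hk



section fcount

variable {k m : ℕ} [NeZero k]

lemma fcount (hk : Even k) (hkpos : 0 < k) (g : Equiv.Perm (Fin m)) (hg : g * g = 1) :
    (Finset.univ.filter fun f : Fin m → ZMod k =>
        ∀ c, f (g c) + f c = 0 ∧ (g c = c → f c ≠ 0)).card =
      k ^ (g.support.filter fun c => c < g c).card := by
  set T : Finset (Fin m) := g.support.filter fun c => c < g c with hT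
  have hmemT : ∀ c, c ∈ T ↔ c < g c := by
    intro c
    rw [hT, Finset.mem_filter, Equiv.Perm.mem_support]
    constructor
    · exact fun h => h.2
    · exact fun h => ⟨fun he => absurd he.symm (ne_of_lt h), h⟩
  have hgT : ∀ c, c ∉ T → g c ≠ c → g c ∈ T := by
    intro c hc hfix
    rw [hmemT] at hc ⊢
    rw [g_sq_apply hg]
    rcases lt_trichotomy c (g c) with h | h | h
    · exact absurd h hc
    · exact absurd h.symm hfix
    · exact h
  have hcard : k ^ T.card = Fintype.card (↥T → ZMod k) := by
    rw [Fintype.card_fun, ZMod.card, Fintype.card_coe]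
  rw [hcard, ← Finset.card_univ]
  apply Finset.card_bij (fun f _ => fun c : ↥T => f c)
  · intros; exact Finset.mem_univ _
  · intro f1 hf1 f2 hf2 h
    simp only [Finset.mem_filter, Finset.mem_univ, true_and] at hf1 hf2
    have hTeq : ∀ c (hc : c ∈ T), f1 c = f2 c := fun c hc => congrFun h ⟨c, hc⟩
    funext c
    rcases lt_trichotomy c (g c) with hlt | heq | hgt
    · exact hTeq c ((hmemT c).2 hlt)
    · -- fixed point
      have h1 := (hf1 c).1
      have h2 := (hf2 c).1
      rw [← heq] at h1 h2
      have e1 := (add_self_eq_zero_iff hk hkpos _).1 h1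
      have e2 := (add_self_eq_zero_iff hk hkpos _).1 h2
      have n1 := (hf1 c).2 heq.symm
      have n2 := (hf2 c).2 heq.symm
      rcases e1 with e1 | e1
      · exact absurd e1 n1
      rcases e2 with e2 | e2
      · exact absurd e2 n2
      rw [e1, e2]
    · -- g c < c, use value at g c
      have hgcT : g c ∈ T := by
        rw [hmemT, g_sq_apply hg]; exact hgt
      have h1 := (hf1 (g c)).1
      have h2 := (hf2 (g c)).1
      rw [g_sq_apply hg] at h1 h2
      have := hTeq (g c) hgcT
      -- f1 c = -f1 (g c) etc.
      have e1 : f1 c = -f1 (g c) := by linear_combination h1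
      have e2 : f2 c = -f2 (g c) := by linear_combination h2
      rw [e1, e2, this]
  · intro h _
    refine ⟨fun c => if hc : c ∈ T then h ⟨c, hc⟩
      else if hfix : g c = c then ((k / 2 : ℕ) : ZMod k)
      else -(h ⟨g c, hgT c hc hfix⟩), ?_, ?_⟩
    · simp only [Finset.mem_filter, Finset.mem_univ, true_and]
      intro c
      rcases lt_trichotomy c (g c) with hlt | heq | hgt
      · -- c ∈ T, g c ∉ T, g c not fixed
        have hcT : c ∈ T := (hmemT c).2 hlt
        have hgcnT : g c ∉ T := by
          rw [hmemT, g_sq_apply hg]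
          exact fun h' => absurd hlt (asymm h')
        have hgcfix : g (g c) ≠ g c := by
          rw [g_sq_apply hg]; exact ne_of_lt hlt
        constructor
        · rw [dif_neg hgcnT, dif_neg hgcfix, dif_pos hcT]
          have : (⟨g (g c), hgT (g c) hgcnT hgcfix⟩ : ↥T) = ⟨c, hcT⟩ := by
            simp [g_sq_apply hg]
          rw [this]
          ring
        · intro h'; exact absurd h'.symm (ne_of_lt hlt)
      · -- fixed point
        have hcnT : c ∉ T := by rw [hmemT, ← heq]; exact lt_irrefl c
        have hgceq : g c = c := heq.symm
        constructor
        · simp only [hgceq, dif_neg hcnT, dif_pos hgceq]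
          exact half_add_half hk
        · intro _
          rw [dif_neg hcnT, dif_pos hgceq]
          exact half_ne_zero hk hkpos
      · -- g c < c : g c ∈ T, c ∉ T
        have hcnT : c ∉ T := by rw [hmemT]; exact fun h' => absurd h' (asymm hgt)
        have hcfix : g c ≠ c := ne_of_lt hgt
        have hgcT : g c ∈ T := hgT c hcnT hcfix
        constructor
        · rw [dif_pos hgcT, dif_neg hcnT, dif_neg hcfix]
          ring
        · intro h'; exact absurd h' hcfix
    · funext c
      obtain ⟨c, hc⟩ := c
      simp [dif_pos hc]

end fcount



lemma support_card_eq_two_mul {m : ℕ} (g : Equiv.Perm (Fin m)) (hg : g * g = 1) :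
    g.support.card = 2 * (g.support.filter fun c => c < g c).card := by
  have hsplit := Finset.card_filter_add_card_filter_not
    (s := g.support) (p := fun c => c < g c)
  have heq : (g.support.filter fun c => ¬ c < g c).card
      = (g.support.filter fun c => c < g c).card := by
    apply Finset.card_bij (fun c _ => g c)
    · intro c hc
      simp only [Finset.mem_filter, Equiv.Perm.mem_support, not_lt] at hc ⊢
      obtain ⟨hne, hle⟩ := hc
      have hlt : g c < c := lt_of_le_of_ne hle hne
      refine ⟨?_, ?_⟩
      · rw [g_sq_apply hg]; exact Ne.symm hne
      · rw [g_sq_apply hg]; exact hlt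
    · intro c1 hc1 c2 hc2 h
      exact g.injective h
    · intro b hb
      simp only [Finset.mem_filter, Equiv.Perm.mem_support, not_lt] at hb ⊢
      obtain ⟨hne, hlt⟩ := hb
      refine ⟨g b, ⟨?_, ?_⟩, (g_sq_apply hg b)⟩
      · rw [g_sq_apply hg]; exact fun h => hne h.symm
      · rw [g_sq_apply hg]; exact le_of_lt hlt
  omega

lemma dfac_step (r : ℕ) : (2 * r + 1)‼ = (2 * r + 1) * (2 * r - 1)‼ := by
  cases r with
  | zero => decide
  | succ n =>
    have h2 : 2 * (n + 1) - 1 = 2 * n + 1 := by omega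
    have h3 : 2 * (n + 1) + 1 = (2 * n + 1) + 2 := by ring
    rw [h2, h3, Nat.doubleFactorial_add_two]

lemma invol_support_count {γ : Type*} [Fintype γ] [DecidableEq γ] :
    ∀ (r : ℕ) (s : Finset γ), s.card = 2 * r →
    (Finset.univ.filter fun g : Equiv.Perm γ => g * g = 1 ∧ g.support = s).card
      = (2 * r - 1)‼ := by
  intro r
  induction r with
  | zero =>
    intro s hs
    rw [Finset.card_eq_zero] at hs
    subst hs
    rw [show ((2*0-1)‼) = 1 by decide]
    rw [Finset.card_eq_one]
    refine ⟨1, ?_⟩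
    ext g
    simp only [Finset.mem_filter, Finset.mem_univ, true_and, Finset.mem_singleton,
      Equiv.Perm.support_eq_empty_iff]
    constructor
    · exact fun h => h.2
    · rintro rfl; simp
  | succ r ih =>
    intro s hs
    have hne : s.Nonempty := Finset.card_pos.mp (by omega)
    obtain ⟨a, ha⟩ := hne
    rw [Finset.card_eq_sum_card_fiberwise
      (f := fun g : Equiv.Perm γ => g a) (t := s.erase a) ?_]
    · have hfib : ∀ b ∈ s.erase a,
          ((Finset.univ.filter fun g : Equiv.Perm γ => g * g = 1 ∧ g.support = s).filter
            (fun g => g a = b)).card = (2 * r - 1)‼ := by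
        intro b hb
        rw [Finset.mem_erase] at hb
        obtain ⟨hba, hbs⟩ := hb
        rw [← ih ((s.erase a).erase b) (by
          rw [Finset.card_erase_of_mem (Finset.mem_erase.2 ⟨hba, hbs⟩),
            Finset.card_erase_of_mem ha, hs]; omega)]
        apply Finset.card_bij (fun g _ => g * Equiv.swap a b)
        · intro g hg
          simp only [Finset.mem_filter, Finset.mem_univ, true_and] at hg ⊢
          obtain ⟨⟨hg1, hg2⟩, hg3⟩ := hg
          have hgb : g b = a := by rw [← hg3, g_sq_apply hg1]
          have happ : ∀ x, x ≠ a → x ≠ b → (g * Equiv.swap a b) x = g x := by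
            intro x hxa hxb
            rw [Equiv.Perm.mul_apply, Equiv.swap_apply_of_ne_of_ne hxa hxb]
          have happa : (g * Equiv.swap a b) a = a := by
            rw [Equiv.Perm.mul_apply, Equiv.swap_apply_left, hgb]
          have happb : (g * Equiv.swap a b) b = b := by
            rw [Equiv.Perm.mul_apply, Equiv.swap_apply_right, hg3]
          refine ⟨?_, ?_⟩
          · ext x
            rw [Equiv.Perm.mul_apply]
            by_cases hxa : x = a
            · subst hxa; rw [happa, happa]; simp
            by_cases hxb : x = b
            · subst hxb; rw [happb, happb]; simp
            rw [happ x hxa hxb]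
            have hgxa : g x ≠ a := fun h => hxb (by rw [← hg3, ← h, g_sq_apply hg1])
            have hgxb : g x ≠ b := fun h => hxa (by rw [← hgb, ← h, g_sq_apply hg1])
            rw [happ _ hgxa hgxb, g_sq_apply hg1]
            simp
          · ext x
            rw [Equiv.Perm.mem_support]
            by_cases hxa : x = a
            · subst hxa
              simp only [happa, ne_eq, not_true_eq_false, false_iff]
              intro hmem
              exact (Finset.mem_erase.1 (Finset.mem_erase.1 hmem).2).1 rfl
            by_cases hxb : x = b
            · subst hxb
              simp only [happb, ne_eq, not_true_eq_false, false_iff]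
              intro hmem
              exact (Finset.mem_erase.1 hmem).1 rfl
            rw [happ x hxa hxb, Finset.mem_erase, Finset.mem_erase, ← hg2,
              Equiv.Perm.mem_support]
            tauto
        · intro g1 hg1 g2 hg2 h
          exact mul_right_cancel h
        · intro g' hg'
          simp only [Finset.mem_filter, Finset.mem_univ, true_and] at hg'
          obtain ⟨hg1, hg2⟩ := hg'
          have hanot : a ∉ g'.support := by rw [hg2]; simp
          have hbnot : b ∉ g'.support := by
            rw [hg2]
            intro h
            exact (Finset.mem_erase.1 h).1 rfl
          rw [Equiv.Perm.notMem_support] at hanot hbnot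
          refine ⟨g' * Equiv.swap a b, ?_, ?_⟩
          · simp only [Finset.mem_filter, Finset.mem_univ, true_and]
            have happ : ∀ x, x ≠ a → x ≠ b → (g' * Equiv.swap a b) x = g' x := by
              intro x hxa hxb
              rw [Equiv.Perm.mul_apply, Equiv.swap_apply_of_ne_of_ne hxa hxb]
            have happa : (g' * Equiv.swap a b) a = b := by
              rw [Equiv.Perm.mul_apply, Equiv.swap_apply_left, hbnot]
            have happb : (g' * Equiv.swap a b) b = a := by
              rw [Equiv.Perm.mul_apply, Equiv.swap_apply_right, hanot]
            refine ⟨⟨?_, ?_⟩, happa⟩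
            · ext x
              rw [Equiv.Perm.mul_apply]
              by_cases hxa : x = a
              · subst hxa; rw [happa, happb]; simp
              by_cases hxb : x = b
              · subst hxb; rw [happb, happa]; simp
              rw [happ x hxa hxb]
              have hgxa : g' x ≠ a := by
                intro h
                apply hxa
                rw [← hanot, ← h, g_sq_apply hg1]
              have hgxb : g' x ≠ b := by
                intro h
                apply hxb
                rw [← hbnot, ← h, g_sq_apply hg1]
              rw [happ _ hgxa hgxb, g_sq_apply hg1]
              simp
            · ext x
              rw [Equiv.Perm.mem_support]
              by_cases hxa : x = a
              · subst hxa
                simp only [happa]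
                constructor
                · intro _; exact ha
                · intro _; exact hba
              by_cases hxb : x = b
              · subst hxb
                simp only [happb]
                constructor
                · intro _; exact hbs
                · intro _; exact fun h => hba h.symm
              rw [happ x hxa hxb, ← Equiv.Perm.mem_support, hg2,
                Finset.mem_erase, Finset.mem_erase]
              tauto
          · rw [mul_assoc, Equiv.swap_mul_self, mul_one]
      rw [Finset.sum_congr rfl hfib, Finset.sum_const,
        Finset.card_erase_of_mem ha, hs, smul_eq_mul]
      have h1 : 2 * (r + 1) - 1 = 2 * r + 1 := by omega
      rw [h1, dfac_step r]
    · intro g hg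
      simp only [Finset.mem_coe, Finset.mem_filter, Finset.mem_univ, true_and] at hg
      obtain ⟨hg1, hg2⟩ := hg
      rw [Finset.mem_coe, Finset.mem_erase]
      constructor
      · intro h
        have : a ∈ g.support := by rw [hg2]; exact ha
        rw [Equiv.Perm.mem_support] at this
        exact this h
      · rw [← hg2]
        apply Equiv.Perm.apply_mem_support.2
        rw [hg2]; exact ha



lemma cycleType_eq_replicate {Y : Type*} [Fintype Y] [DecidableEq Y] {β : Equiv.Perm Y}
    {k m : ℕ} (hk2 : 2 ≤ k) (hcard : Fintype.card Y = k * m)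
    (hβ : ∀ y, Function.minimalPeriod (⇑β) y = k) :
    β.cycleType = Multiset.replicate m k := by
  have hper : ∀ (y : Y) (n : ℕ), (β ^ n) y = y ↔ k ∣ n := by
    intro y n
    rw [← hβ y, ← Function.isPeriodicPt_iff_minimalPeriod_dvd]
    rw [IsPeriodicPt, IsFixedPt, ← Equiv.Perm.coe_pow]
  have hsupp : β.support = Finset.univ := by
    rw [Finset.eq_univ_iff_forall]
    intro y
    rw [Equiv.Perm.mem_support]
    intro h
    have h1 : Function.minimalPeriod (⇑β) y = 1 :=
      Function.minimalPeriod_eq_one_iff_isFixedPt.2 h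
    rw [hβ y] at h1; omega
  have hall : ∀ n ∈ β.cycleType, n = k := by
    intro n hn
    obtain ⟨c, τ, hβeq, hd, hc, hcn⟩ := Equiv.Perm.mem_cycleType_iff.1 hn
    obtain ⟨x, hx, -⟩ := id hc
    -- c ^ j x = β ^ j x
    have hτx : ∀ j : ℕ, (τ ^ j) x = x := by
      intro j
      have : τ x = x := by
        by_contra hτ
        exact (Equiv.Perm.disjoint_iff_eq_or_eq.1 hd x).elim (fun h => hx h) (fun h => hτ h)
      exact Equiv.Perm.pow_apply_eq_self_of_apply_eq_self this j
    have hcj : ∀ j : ℕ, (c ^ j) x = (β ^ j) x := by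
      intro j
      have hcomm : Commute c τ := (Equiv.Perm.Disjoint.commute hd)
      rw [hβeq, hcomm.mul_pow, Equiv.Perm.mul_apply, hτx j]
    -- orderOf c = k
    have h1 : orderOf c ∣ k := by
      apply orderOf_dvd_of_pow_eq_one
      rw [hc.pow_eq_one_iff' hx, hcj, hper]
    have h2 : k ∣ orderOf c := by
      rw [← hper x (orderOf c), ← hcj, pow_orderOf_eq_one]
      rfl
    rw [← hcn, ← hc.orderOf]
    exact Nat.dvd_antisymm h1 h2
  have hrep := Multiset.eq_replicate_of_mem hall
  rw [hrep]
  congr 1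
  have hsum := β.sum_cycleType
  rw [hrep, hsupp, Multiset.sum_replicate, smul_eq_mul, Finset.card_univ, hcard] at hsum
  have : Multiset.card β.cycleType * k = m * k := by rw [hsum]; ring
  exact Nat.eq_of_mul_eq_mul_right (by omega) this



lemma invol_card_support_eq {γ : Type*} [Fintype γ] [DecidableEq γ] (r : ℕ) :
    (Finset.univ.filter fun g : Equiv.Perm γ => g * g = 1 ∧ g.support.card = 2 * r).card
      = (Fintype.card γ).choose (2 * r) * (2 * r - 1)‼ := by
  rw [Finset.card_eq_sum_card_fiberwise
    (f := fun g : Equiv.Perm γ => g.support) (t := Finset.univ.powersetCard (2 * r)) ?_]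
  · have hfib : ∀ s ∈ Finset.univ.powersetCard (2 * r),
        ((Finset.univ.filter fun g : Equiv.Perm γ =>
          g * g = 1 ∧ g.support.card = 2 * r).filter fun g => g.support = s).card
          = (2 * r - 1)‼ := by
      intro s hs
      rw [Finset.mem_powersetCard_univ] at hs
      rw [← invol_support_count r s hs]
      congr 1
      ext g
      simp only [Finset.mem_filter, Finset.mem_univ, true_and]
      constructor
      · rintro ⟨⟨h1, _⟩, h3⟩; exact ⟨h1, h3⟩
      · rintro ⟨h1, h2⟩; exact ⟨⟨h1, by rw [h2, hs]⟩, h2⟩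
    rw [Finset.sum_congr rfl hfib, Finset.sum_const, Finset.card_powersetCard,
      Finset.card_univ, smul_eq_mul]
  · intro g hg
    simp only [Finset.mem_coe, Finset.mem_filter, Finset.mem_univ, true_and] at hg
    rw [Finset.mem_coe, Finset.mem_powersetCard_univ]
    exact hg.2

lemma pairs_card {k m : ℕ} [NeZero k] (hk : Even k) (hkpos : 0 < k) :
    (Finset.univ.filter fun gf : Equiv.Perm (Fin m) × (Fin m → ZMod k) =>
        gf.1 * gf.1 = 1 ∧ ∀ c, gf.2 (gf.1 c) + gf.2 c = 0 ∧ (gf.1 c = c → gf.2 c ≠ 0)).card =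
    ∑ r ∈ Finset.range (m / 2 + 1), m.choose (2 * r) * k ^ r * (2 * r - 1)‼ := by
  rw [Finset.card_eq_sum_card_fiberwise
    (f := fun gf : Equiv.Perm (Fin m) × (Fin m → ZMod k) => gf.1)
    (t := Finset.univ.filter fun g : Equiv.Perm (Fin m) => g * g = 1) ?_]
  · have hfib : ∀ g ∈ (Finset.univ.filter fun g : Equiv.Perm (Fin m) => g * g = 1),
        ((Finset.univ.filter fun gf : Equiv.Perm (Fin m) × (Fin m → ZMod k) =>
          gf.1 * gf.1 = 1 ∧ ∀ c, gf.2 (gf.1 c) + gf.2 c = 0 ∧ (gf.1 c = c → gf.2 c ≠ 0)).filter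
            fun gf => gf.1 = g).card
          = k ^ (g.support.filter fun c => c < g c).card := by
      intro g hg
      simp only [Finset.mem_filter, Finset.mem_univ, true_and] at hg
      rw [← fcount hk hkpos g hg]
      apply Finset.card_bij (fun gf _ => gf.2)
      · rintro ⟨g', f⟩ h
        simp only [Finset.mem_filter, Finset.mem_univ, true_and] at h ⊢
        obtain ⟨⟨_, h2⟩, h3⟩ := h
        subst h3
        exact h2
      · rintro ⟨g1, f1⟩ h1 ⟨g2, f2⟩ h2 h
        simp only [Finset.mem_filter] at h1 h2
        simp only at h
        rw [Prod.ext_iff]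
        exact ⟨h1.2.trans h2.2.symm, h⟩
      · intro f hf
        simp only [Finset.mem_filter, Finset.mem_univ, true_and] at hf
        refine ⟨(g, f), ?_, rfl⟩
        simp only [Finset.mem_filter, Finset.mem_univ, true_and]
        exact ⟨⟨hg, hf⟩, trivial⟩
    rw [Finset.sum_congr rfl hfib]
    rw [← Finset.sum_fiberwise_of_maps_to
      (g := fun g : Equiv.Perm (Fin m) => g.support.card / 2)
      (t := Finset.range (m / 2 + 1)) ?_]
    · apply Finset.sum_congr rfl
      intro r hr
      have hinner : ∀ g ∈ ((Finset.univ.filter fun g : Equiv.Perm (Fin m) => g * g = 1).filter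
          fun g => g.support.card / 2 = r),
          k ^ (g.support.filter fun c => c < g c).card = k ^ r := by
        intro g hg
        simp only [Finset.mem_filter, Finset.mem_univ, true_and] at hg
        obtain ⟨h1, h2⟩ := hg
        have := support_card_eq_two_mul g h1
        congr 1
        omega
      rw [Finset.sum_congr rfl hinner, Finset.sum_const, smul_eq_mul]
      have hcount : ((Finset.univ.filter fun g : Equiv.Perm (Fin m) => g * g = 1).filter
          fun g => g.support.card / 2 = r)
          = (Finset.univ.filter fun g : Equiv.Perm (Fin m) =>
              g * g = 1 ∧ g.support.card = 2 * r) := by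
        ext g
        simp only [Finset.mem_filter, Finset.mem_univ, true_and]
        constructor
        · rintro ⟨h1, h2⟩
          have := support_card_eq_two_mul g h1
          exact ⟨h1, by omega⟩
        · rintro ⟨h1, h2⟩
          exact ⟨h1, by omega⟩
      rw [hcount, invol_card_support_eq r, Fintype.card_fin]
      ring
    · intro g hg
      simp only [Finset.mem_filter, Finset.mem_univ, true_and] at hg
      rw [Finset.mem_range]
      have h1 : g.support.card ≤ m := by
        have := Finset.card_le_univ g.support
        rwa [Fintype.card_fin] at this
      exact Nat.lt_succ_of_le (Nat.div_le_div_right h1)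
  · rintro ⟨g, f⟩ h
    simp only [Finset.mem_coe, Finset.mem_filter, Finset.mem_univ, true_and] at h ⊢
    exact h.1

end CommMatchAux


open scoped Classical Nat in
/-- For even positive `k`, the number of fixed-point free involutions commuting with a
permutation of cycle type `[k^m]` (every point has minimal period `k`, on a set of size
`k·m`) equals `Σ_{r=0}^{⌊m/2⌋} C(m,2r) k^r (2r-1)!!`. -/
theorem comm_matchings_even_cycles {X : Type*} [Fintype X] [DecidableEq X]
    (k m : ℕ) (hk : Even k) (hkpos : 0 < k) (α : Equiv.Perm X)
    (hcard : Fintype.card X = k * m)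
    (hα : ∀ x : X, Function.minimalPeriod (⇑α) x = k) :
    (Finset.univ.filter fun ι : Equiv.Perm X =>
        ι * ι = 1 ∧ (∀ x, ι x ≠ x) ∧ ι * α = α * ι).card =
      ∑ r ∈ Finset.range (m / 2 + 1), m.choose (2 * r) * k ^ r * (2 * r - 1)‼ := by
  haveI : NeZero k := ⟨hkpos.ne'⟩
  have hk2 : 2 ≤ k := by
    obtain ⟨j, hj⟩ := hk
    omega
  have hcard' : Fintype.card (ZMod k × Fin m) = k * m := by
    rw [Fintype.card_prod, ZMod.card, Fintype.card_fin]
  let e₀ : X ≃ ZMod k × Fin m := Fintype.equivOfCardEq (hcard.trans hcard'.symm)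
  have hβ : ∀ y, Function.minimalPeriod (⇑(e₀.permCongr α)) y = k := fun y => by
    rw [CommMatchAux.minimalPeriod_permCongr]; exact hα _
  have hct : (e₀.permCongr α).cycleType = (CommMatchAux.std k m).cycleType := by
    rw [CommMatchAux.cycleType_eq_replicate hk2 hcard' hβ,
      CommMatchAux.cycleType_eq_replicate hk2 hcard'
        (fun p => CommMatchAux.minimalPeriod_std p)]
  obtain ⟨σ, hσ⟩ := isConj_iff.1 (Equiv.Perm.isConj_iff_cycleType_eq.2 hct)
  have hE : (e₀.trans σ).permCongr α = CommMatchAux.std k m := by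
    rw [← hσ]
    apply Equiv.ext
    intro y
    simp [Equiv.Perm.mul_apply, Equiv.Perm.inv_def]
  rw [CommMatchAux.card_filter_permCongr (e₀.trans σ) α, hE,
    CommMatchAux.model_card_eq_pairs hkpos, CommMatchAux.pairs_card hk hkpos]
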